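/- Fix n ≥ 0, embed S_n into S_{n+1} as the permutations fixing n+1, and let pr_n : ℂ[S_{n+1}] → ℂ[S_n] be the ℂ-linear map defined on group elements by pr_n(g) = g (regarded as an element of S_n) if g(n+1) = n+1, and pr_n(g) = 0 otherwise. Then for every k ≥ 0, the element pr_n(X_{n+1}^k) lies in the center of ℂ[S_n], where X_{n+1} = Σ_{i=1}^{n} (i, n+1) is the Jucys–Murphy element of ℂ[S_{n+1}]. -/

import Mathlib

/-- A permutation of `{1, …, n+1}` fixing `n+1`, regarded as a permutation of
`{1, …, n}`. -/
def restrictLast {n : ℕ} (g : Equiv.Perm (Fin (n + 1)))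
    (hg : g (Fin.last n) = Fin.last n) : Equiv.Perm (Fin n) where
  toFun i := Fin.castPred (g i.castSucc)
    (fun h => (Fin.castSucc_lt_last i).ne (g.injective (h.trans hg.symm)))
  invFun i := Fin.castPred (g⁻¹ i.castSucc)
    (fun h => (Fin.castSucc_lt_last i).ne (by
      have h' := congrArg g h
      rwa [Equiv.Perm.coe_inv, Equiv.apply_symm_apply, hg] at h'))
  left_inv i := by
    simp [Fin.castSucc_castPred]
  right_inv i := by
    simp [Fin.castSucc_castPred]

/-- The `ℂ`-linear map `pr_n : ℂ[S_{n+1}] → ℂ[S_n]` defined on group elements by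
`pr_n(g) = g` (regarded as an element of `S_n`) if `g(n+1) = n+1` and `pr_n(g) = 0`
otherwise. -/
noncomputable def prLast (n : ℕ) (x : MonoidAlgebra ℂ (Equiv.Perm (Fin (n + 1)))) :
    MonoidAlgebra ℂ (Equiv.Perm (Fin n)) :=
  x.coeff.sum fun g a =>
    if hg : g (Fin.last n) = Fin.last n
    then MonoidAlgebra.single (restrictLast g hg) a
    else 0

lemma castSucc_restrictLast {n : ℕ} (g : Equiv.Perm (Fin (n + 1)))
    (hg : g (Fin.last n) = Fin.last n) (i : Fin n) :
    (restrictLast g hg i).castSucc = g i.castSucc :=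
  Fin.castSucc_castPred _ (fun h => (Fin.castSucc_lt_last i).ne (g.injective (h.trans hg.symm)))

lemma restrictLast_mul {n : ℕ} (g h : Equiv.Perm (Fin (n + 1)))
    (hg : g (Fin.last n) = Fin.last n) (hh : h (Fin.last n) = Fin.last n) :
    restrictLast (g * h) (by simp [Equiv.Perm.mul_apply, hh, hg]) =
      restrictLast g hg * restrictLast h hh := by
  refine Equiv.ext fun i => Fin.castSucc_injective _ ?_
  simp only [Equiv.Perm.mul_apply, castSucc_restrictLast]

/-- The embedding `S_n → S_{n+1}`. -/
noncomputable def liftPerm (n : ℕ) (σ : Equiv.Perm (Fin n)) : Equiv.Perm (Fin (n + 1)) :=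
  σ.viaEmbedding Fin.castSuccEmb

lemma last_not_mem_range (n : ℕ) : Fin.last n ∉ Set.range (Fin.castSuccEmb : Fin n ↪ Fin (n+1)) := by
  rintro ⟨i, hi⟩
  exact (Fin.castSucc_lt_last i).ne hi

lemma liftPerm_castSucc {n : ℕ} (σ : Equiv.Perm (Fin n)) (i : Fin n) :
    liftPerm n σ i.castSucc = (σ i).castSucc :=
  σ.viaEmbedding_apply Fin.castSuccEmb i

lemma liftPerm_last {n : ℕ} (σ : Equiv.Perm (Fin n)) :
    liftPerm n σ (Fin.last n) = Fin.last n :=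
  σ.viaEmbedding_apply_of_notMem Fin.castSuccEmb _ (last_not_mem_range n)

lemma restrictLast_liftPerm {n : ℕ} (σ : Equiv.Perm (Fin n)) :
    restrictLast (liftPerm n σ) (liftPerm_last σ) = σ := by
  refine Equiv.ext fun i => Fin.castSucc_injective _ ?_
  rw [castSucc_restrictLast, liftPerm_castSucc]

lemma prLast_single {n : ℕ} (g : Equiv.Perm (Fin (n + 1))) (a : ℂ) :
    prLast n (MonoidAlgebra.single g a) =
      if hg : g (Fin.last n) = Fin.last n
      then MonoidAlgebra.single (restrictLast g hg) a
      else 0 := by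
  unfold prLast
  rw [MonoidAlgebra.coeff_single, Finsupp.sum_single_index]
  split <;> simp

lemma prLast_add {n : ℕ} (x y : MonoidAlgebra ℂ (Equiv.Perm (Fin (n + 1)))) :
    prLast n (x + y) = prLast n x + prLast n y := by
  unfold prLast
  rw [MonoidAlgebra.coeff_add, Finsupp.sum_add_index] <;> intros <;> split <;> simp [Finsupp.single_add]

lemma prLast_of_mul {n : ℕ} (σ : Equiv.Perm (Fin n))
    (x : MonoidAlgebra ℂ (Equiv.Perm (Fin (n + 1)))) :
    prLast n (MonoidAlgebra.single (liftPerm n σ) 1 * x) =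
      MonoidAlgebra.single σ 1 * prLast n x := by
  induction x using MonoidAlgebra.induction with
  | zero => simp [prLast]
  | single_add g a x _ _ ih =>
    rw [mul_add, prLast_add, prLast_add, ih, mul_add]
    congr 1
    rw [MonoidAlgebra.single_mul_single, one_mul, prLast_single, prLast_single]
    by_cases hg : g (Fin.last n) = Fin.last n
    · have hL : liftPerm n σ (Fin.last n) = Fin.last n := liftPerm_last σ
      have h2 : (liftPerm n σ * g) (Fin.last n) = Fin.last n := by
        simp [Equiv.Perm.mul_apply, hg, hL]
      rw [dif_pos hg, dif_pos h2, MonoidAlgebra.single_mul_single, one_mul]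
      congr 1
      rw [restrictLast_mul _ _ hL hg, restrictLast_liftPerm]
    · have h2 : ¬ (liftPerm n σ * g) (Fin.last n) = Fin.last n := by
        intro h
        apply hg
        have := (liftPerm n σ).injective (h.trans (liftPerm_last σ).symm)
        exact this
      rw [dif_neg hg, dif_neg h2, mul_zero]

lemma prLast_mul_of {n : ℕ} (σ : Equiv.Perm (Fin n))
    (x : MonoidAlgebra ℂ (Equiv.Perm (Fin (n + 1)))) :
    prLast n (x * MonoidAlgebra.single (liftPerm n σ) 1) =
      prLast n x * MonoidAlgebra.single σ 1 := by
  induction x using MonoidAlgebra.induction with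
  | zero => simp [prLast]
  | single_add g a x _ _ ih =>
    rw [add_mul, prLast_add, prLast_add, ih, add_mul]
    congr 1
    rw [MonoidAlgebra.single_mul_single, mul_one, prLast_single, prLast_single]
    by_cases hg : g (Fin.last n) = Fin.last n
    · have hL : liftPerm n σ (Fin.last n) = Fin.last n := liftPerm_last σ
      have h2 : (g * liftPerm n σ) (Fin.last n) = Fin.last n := by
        simp [Equiv.Perm.mul_apply, hg, hL]
      rw [dif_pos hg, dif_pos h2, MonoidAlgebra.single_mul_single, mul_one]
      congr 1
      rw [restrictLast_mul _ _ hg hL, restrictLast_liftPerm]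
    · have h2 : ¬ (g * liftPerm n σ) (Fin.last n) = Fin.last n := by
        intro h
        apply hg
        rw [Equiv.Perm.mul_apply, liftPerm_last] at h
        exact h
      rw [dif_neg hg, dif_neg h2, zero_mul]

lemma liftPerm_conj_swap {n : ℕ} (σ : Equiv.Perm (Fin n)) (i : Fin n) :
    liftPerm n σ * Equiv.swap i.castSucc (Fin.last n) =
      Equiv.swap (σ i).castSucc (Fin.last n) * liftPerm n σ := by
  have := Equiv.swap_apply_apply (liftPerm n σ) i.castSucc (Fin.last n)
  rw [liftPerm_castSucc, liftPerm_last] at this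
  rw [this]
  group

lemma commute_of_X {n : ℕ} (σ : Equiv.Perm (Fin n)) :
    Commute (MonoidAlgebra.single (liftPerm n σ) (1 : ℂ))
      (∑ i : Fin n, MonoidAlgebra.of ℂ (Equiv.Perm (Fin (n + 1)))
          (Equiv.swap i.castSucc (Fin.last n))) := by
  unfold Commute SemiconjBy
  rw [Finset.mul_sum, Finset.sum_mul]
  simp only [MonoidAlgebra.of_apply, MonoidAlgebra.single_mul_single, one_mul, mul_one,
    liftPerm_conj_swap]
  exact Equiv.sum_comp σ (fun j =>
    MonoidAlgebra.single (Equiv.swap j.castSucc (Fin.last n) * liftPerm n σ) (1 : ℂ))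

/-- For every `k ≥ 0`, the element `pr_n(X_{n+1}^k)` lies in the center of `ℂ[S_n]`,
where `X_{n+1} = Σ_{i=1}^{n} (i, n+1)` is the Jucys–Murphy element of `ℂ[S_{n+1}]`. -/
theorem prLast_jucysMurphy_pow_mem_center (n k : ℕ) :
    prLast n ((∑ i : Fin n, MonoidAlgebra.of ℂ (Equiv.Perm (Fin (n + 1)))
          (Equiv.swap i.castSucc (Fin.last n))) ^ k)
      ∈ Subalgebra.center ℂ (MonoidAlgebra ℂ (Equiv.Perm (Fin n))) := by
  rw [Subalgebra.mem_center_iff]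
  intro b
  set X := ∑ i : Fin n, MonoidAlgebra.of ℂ (Equiv.Perm (Fin (n + 1)))
          (Equiv.swap i.castSucc (Fin.last n)) with hX
  have key : ∀ σ : Equiv.Perm (Fin n),
      MonoidAlgebra.single σ (1 : ℂ) * prLast n (X ^ k) =
        prLast n (X ^ k) * MonoidAlgebra.single σ (1 : ℂ) := by
    intro σ
    have hc : Commute (MonoidAlgebra.single (liftPerm n σ) (1 : ℂ)) (X ^ k) :=
      (commute_of_X σ).pow_right k
    rw [← prLast_of_mul, hc.eq, prLast_mul_of]
  induction b using MonoidAlgebra.induction_on with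
  | of g => exact key g
  | add f g hf hg => rw [add_mul, mul_add, hf, hg]
  | smul r f hf => rw [smul_mul_assoc, mul_smul_comm, hf]
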